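/- Let $q,a,c,e$ be complex numbers with all relevant denominators nonzero, and define $A_k = \frac{(q^3c^2e^2/a^2; q^2)_k\,(a^4/qc^3e^3; q^2)_k\,(q^4c; q^3)_k\,(q^4e; q^3)_k}{(q^2a^3/c^2e^2; q^3)_k\,(q^6c^3e^3/a^3; q^3)_k\,(qa/c; q^2)_k\,(qa/e; q^2)_k}$ for $k \ge -1$. Then for all $k \ge 0$, $A_k - A_{k-1} = \frac{(1-q^{5k}a)(1-q^{2+k}ce/a)(1-q^2c^2e^3/a^3)(1-q^2c^3e^2/a^3)}{(1-qc)(1-qe)(1-qc^2e^2/a^2)(1-q^3c^3e^3/a^4)} \cdot \frac{(qc^2e^2/a^2; q^2)_k\,(a^4/q^3c^3e^3; q^2)_k}{(qa/c; q^2)_k\,(qa/e; q^2)_k} \cdot \frac{(qc; q^3)_k\,(qe; q^3)_k}{(q^2a^3/c^2e^2; q^3)_k\,(q^6c^3e^3/a^3; q^3)_k}\, q^{2k}$. -/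

import Mathlib

/-- The finite `q`-shifted factorial `(x; p)_k`. -/
noncomputable def qp (x p : ℂ) (k : ℕ) : ℂ := ∏ j ∈ Finset.range k, (1 - x * p ^ j)

/-- The `q`-shifted factorial with integer index: `(x;p)_k` for `k ≥ 0` and
`(x;p)_{-1} = (1 - x/p)⁻¹` for negative index. -/
noncomputable def qpz (x p : ℂ) (k : ℤ) : ℂ :=
  if 0 ≤ k then ∏ j ∈ Finset.range k.toNat, (1 - x * p ^ j) else (1 - x / p)⁻¹

lemma qpz_natCast (x p : ℂ) (n : ℕ) : qpz x p (n : ℤ) = qp x p n := by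
  simp [qpz, qp]

lemma qp_succ (x p : ℂ) (n : ℕ) : qp x p (n + 1) = qp x p n * (1 - x * p ^ n) := by
  simp [qp, Finset.prod_range_succ]

lemma qp_succ' (x p : ℂ) (n : ℕ) : qp x p (n + 1) = (1 - x) * qp (x * p) p n := by
  rw [qp, Finset.prod_range_succ', qp, mul_comm]
  simp only [pow_zero, mul_one]
  congr 1
  exact Finset.prod_congr rfl fun j _ => by ring

set_option maxHeartbeats 1000000 in
lemma abstract2 (P1 P2 P3 P4 Q1 Q2 Q3 Q4 u1 u2 u3 u4 v1 v2 v3 v4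
    R L1 L2 L3 L4 c1 c2 c3 c4 T : ℂ)
    (hQ1 : Q1 ≠ 0) (hQ2 : Q2 ≠ 0) (hQ3 : Q3 ≠ 0) (hQ4 : Q4 ≠ 0)
    (hv1 : v1 ≠ 0) (hv2 : v2 ≠ 0) (hv3 : v3 ≠ 0) (hv4 : v4 ≠ 0)
    (hL1 : L1 ≠ 0) (hL2 : L2 ≠ 0) (hL3 : L3 ≠ 0) (hL4 : L4 ≠ 0)
    (hkey : (u1 * u2 * u3 * u4 - v1 * v2 * v3 * v4) * (L1 * L2 * L3 * L4)
      = R * (c1 * c2 * c3 * c4) * T) :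
    P1 * u1 * (P2 * u2) * (P3 * u3) * (P4 * u4)
      / (Q1 * v1 * (Q2 * v2) * (Q3 * v3) * (Q4 * v4))
    - P1 * P2 * P3 * P4 / (Q1 * Q2 * Q3 * Q4)
    = R / (L1 * L2 * L3 * L4)
      * (c1 * P1 * (c2 * P2) / (Q3 * v3 * (Q4 * v4)))
      * (c3 * P3 * (c4 * P4) / (Q1 * v1 * (Q2 * v2))) * T := by
  have hDv : Q1 * v1 * (Q2 * v2) * (Q3 * v3) * (Q4 * v4) ≠ 0 := by
    apply_rules [mul_ne_zero]
  have hE : Q1 * Q2 * Q3 * Q4 ≠ 0 := by apply_rules [mul_ne_zero]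
  have hRd : L1 * L2 * L3 * L4 * (Q3 * v3 * (Q4 * v4)) * (Q1 * v1 * (Q2 * v2)) ≠ 0 := by
    apply_rules [mul_ne_zero]
  rw [div_sub_div _ _ hDv hE, div_mul_div_comm, div_mul_div_comm, div_mul_eq_mul_div,
    div_eq_div_iff (mul_ne_zero hDv hE) hRd]
  linear_combination (P1 * P2 * P3 * P4 * (Q1 * Q2 * Q3 * Q4) ^ 2 * (v1 * v2 * v3 * v4)) * hkey

set_option maxHeartbeats 2000000 in
lemma key_id (q a c e s : ℂ) (hq : q ≠ 0) (ha : a ≠ 0) (hc : c ≠ 0) (he : e ≠ 0) :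
    ((1 - q ^ 3 * c ^ 2 * e ^ 2 / a ^ 2 * s ^ 2) * (1 - a ^ 4 / (q * c ^ 3 * e ^ 3) * s ^ 2)
        * (1 - q ^ 4 * c * s ^ 3) * (1 - q ^ 4 * e * s ^ 3)
      - (1 - q ^ 2 * a ^ 3 / (c ^ 2 * e ^ 2) * s ^ 3) * (1 - q ^ 6 * c ^ 3 * e ^ 3 / a ^ 3 * s ^ 3)
        * (1 - q * a / c * s ^ 2) * (1 - q * a / e * s ^ 2))
      * ((1 - q * c) * (1 - q * e) * (1 - q * c ^ 2 * e ^ 2 / a ^ 2)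
        * (1 - q ^ 3 * c ^ 3 * e ^ 3 / a ^ 4))
    = (1 - s ^ 5 * q ^ 5 * a) * (1 - s * q ^ 3 * c * e / a) * (1 - q ^ 2 * c ^ 2 * e ^ 3 / a ^ 3)
        * (1 - q ^ 2 * c ^ 3 * e ^ 2 / a ^ 3)
      * ((1 - q * c ^ 2 * e ^ 2 / a ^ 2) * (1 - a ^ 4 / (q ^ 3 * c ^ 3 * e ^ 3))
        * (1 - q * c) * (1 - q * e)) * (s ^ 2 * q ^ 2) := by
  field_simp
  have hA : (a ^ 2 * (q * c ^ 3 * e ^ 3) : ℂ) ≠ 0 := by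
    simp [ha, hq, hc, he, mul_eq_zero, pow_eq_zero_iff]
  have hB : (c ^ 2 * e ^ 2 * a ^ 3 * c * e : ℂ) ≠ 0 := by
    simp [ha, hc, he, mul_eq_zero, pow_eq_zero_iff]
  have hC : (a * a ^ 3 * a ^ 3 * (a ^ 2 * (q ^ 3 * c ^ 3 * e ^ 3)) : ℂ) ≠ 0 := by
    simp [ha, hq, hc, he, mul_eq_zero, pow_eq_zero_iff]
  ring

set_option maxHeartbeats 2000000 in
/-- Backward difference of the sequence `A` from Section 3.1. -/
theorem backward_difference_A_section31 (q a c e : ℂ)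
    (hq : q ≠ 0) (ha : a ≠ 0) (hc : c ≠ 0) (he : e ≠ 0)
    (hnum : (1 - (q ^ 3 * c ^ 2 * e ^ 2 / a ^ 2) / q ^ 2) ≠ 0 ∧
      (1 - (a ^ 4 / (q * c ^ 3 * e ^ 3)) / q ^ 2) ≠ 0 ∧
      (1 - (q ^ 4 * c) / q ^ 3) ≠ 0 ∧ (1 - (q ^ 4 * e) / q ^ 3) ≠ 0)
    (hden : ∀ k : ℤ, -1 ≤ k →
      qpz (q ^ 2 * a ^ 3 / (c ^ 2 * e ^ 2)) (q ^ 3) k ≠ 0 ∧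
      qpz (q ^ 6 * c ^ 3 * e ^ 3 / a ^ 3) (q ^ 3) k ≠ 0 ∧
      qpz (q * a / c) (q ^ 2) k ≠ 0 ∧ qpz (q * a / e) (q ^ 2) k ≠ 0)
    (hlin : (1 - q * c) ≠ 0 ∧ (1 - q * e) ≠ 0 ∧
      (1 - q * c ^ 2 * e ^ 2 / a ^ 2) ≠ 0 ∧ (1 - q ^ 3 * c ^ 3 * e ^ 3 / a ^ 4) ≠ 0) :
    ∀ k : ℕ,
      (fun j : ℤ =>
          qpz (q ^ 3 * c ^ 2 * e ^ 2 / a ^ 2) (q ^ 2) j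
            * qpz (a ^ 4 / (q * c ^ 3 * e ^ 3)) (q ^ 2) j
            * qpz (q ^ 4 * c) (q ^ 3) j * qpz (q ^ 4 * e) (q ^ 3) j
          / (qpz (q ^ 2 * a ^ 3 / (c ^ 2 * e ^ 2)) (q ^ 3) j
              * qpz (q ^ 6 * c ^ 3 * e ^ 3 / a ^ 3) (q ^ 3) j
              * qpz (q * a / c) (q ^ 2) j * qpz (q * a / e) (q ^ 2) j)) (k : ℤ)
        - (fun j : ℤ =>
          qpz (q ^ 3 * c ^ 2 * e ^ 2 / a ^ 2) (q ^ 2) j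
            * qpz (a ^ 4 / (q * c ^ 3 * e ^ 3)) (q ^ 2) j
            * qpz (q ^ 4 * c) (q ^ 3) j * qpz (q ^ 4 * e) (q ^ 3) j
          / (qpz (q ^ 2 * a ^ 3 / (c ^ 2 * e ^ 2)) (q ^ 3) j
              * qpz (q ^ 6 * c ^ 3 * e ^ 3 / a ^ 3) (q ^ 3) j
              * qpz (q * a / c) (q ^ 2) j * qpz (q * a / e) (q ^ 2) j)) ((k : ℤ) - 1) =
      (1 - q ^ (5 * k) * a) * (1 - q ^ (2 + k) * c * e / a)
          * (1 - q ^ 2 * c ^ 2 * e ^ 3 / a ^ 3) * (1 - q ^ 2 * c ^ 3 * e ^ 2 / a ^ 3)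
        / ((1 - q * c) * (1 - q * e) * (1 - q * c ^ 2 * e ^ 2 / a ^ 2)
            * (1 - q ^ 3 * c ^ 3 * e ^ 3 / a ^ 4))
        * (qp (q * c ^ 2 * e ^ 2 / a ^ 2) (q ^ 2) k
            * qp (a ^ 4 / (q ^ 3 * c ^ 3 * e ^ 3)) (q ^ 2) k
          / (qp (q * a / c) (q ^ 2) k * qp (q * a / e) (q ^ 2) k))
        * (qp (q * c) (q ^ 3) k * qp (q * e) (q ^ 3) k
          / (qp (q ^ 2 * a ^ 3 / (c ^ 2 * e ^ 2)) (q ^ 3) k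
              * qp (q ^ 6 * c ^ 3 * e ^ 3 / a ^ 3) (q ^ 3) k))
        * q ^ (2 * k) := by
  obtain ⟨hn1, hn2, hn3, hn4⟩ := hnum
  obtain ⟨hl1, hl2, hl3, hl4⟩ := hlin
  intro k
  simp only []
  cases k with
  | zero =>
    obtain ⟨hm1, hm2, hm3, hm4⟩ := hden (-1) le_rfl
    simp only [qpz, show ¬ ((0:ℤ) ≤ -1) by norm_num, if_false] at hm1 hm2 hm3 hm4
    replace hm1 : (1 - q ^ 2 * a ^ 3 / (c ^ 2 * e ^ 2) / q ^ 3) ≠ 0 :=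
      fun h => hm1 (by rw [h, inv_zero])
    replace hm2 : (1 - q ^ 6 * c ^ 3 * e ^ 3 / a ^ 3 / q ^ 3) ≠ 0 :=
      fun h => hm2 (by rw [h, inv_zero])
    replace hm3 : (1 - q * a / c / q ^ 2) ≠ 0 := fun h => hm3 (by rw [h, inv_zero])
    replace hm4 : (1 - q * a / e / q ^ 2) ≠ 0 := fun h => hm4 (by rw [h, inv_zero])
    norm_num [qpz, qp]
    rw [show ∀ x1 x2 x3 x4 y1 y2 y3 y4 : ℂ, x1⁻¹ * x2⁻¹ * x3⁻¹ * x4⁻¹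
        / (y1⁻¹ * y2⁻¹ * y3⁻¹ * y4⁻¹) = (y1 * y2 * y3 * y4) / (x1 * x2 * x3 * x4) from
      fun _ _ _ _ _ _ _ _ => by
        simp [div_eq_mul_inv, mul_inv, inv_inv]; ring]
    rw [one_sub_div (mul_ne_zero (mul_ne_zero (mul_ne_zero hn1 hn2) hn3) hn4),
      div_eq_div_iff (mul_ne_zero (mul_ne_zero (mul_ne_zero hn1 hn2) hn3) hn4)
        (mul_ne_zero (mul_ne_zero (mul_ne_zero hl1 hl2) hl3) hl4)]
    field_simp [hq, ha, hc, he]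
    have hM : (a ^ 2 * q ^ 2 * (q * c ^ 3 * e ^ 3 * q ^ 2) * q ^ 3 * q ^ 3 : ℂ) ≠ 0 := by
      simp [hq, ha, hc, he, mul_eq_zero, pow_eq_zero_iff]
    have hN : (c ^ 2 * e ^ 2 * q ^ 3 * (a ^ 3 * q ^ 3) * (c * q ^ 2) * (e * q ^ 2) : ℂ) ≠ 0 := by
      simp [hq, ha, hc, he, mul_eq_zero, pow_eq_zero_iff]
    have hP : (a * a ^ 3 * a ^ 3 * (a ^ 2 * q ^ 2 * (q * c ^ 3 * e ^ 3 * q ^ 2) * q ^ 3 * q ^ 3)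
        : ℂ) ≠ 0 := by
      simp [hq, ha, hc, he, mul_eq_zero, pow_eq_zero_iff]
    ring
  | succ m =>
    have hmcast : (((m + 1 : ℕ)) : ℤ) - 1 = (m : ℤ) := by push_cast; ring
    rw [hmcast]
    simp only [qpz_natCast]
    obtain ⟨hq1, hq2, hq3, hq4⟩ := hden (m : ℤ) (by linarith [Int.natCast_nonneg m])
    obtain ⟨hr1, hr2, hr3, hr4⟩ := hden ((m + 1 : ℕ) : ℤ) (by linarith [Int.natCast_nonneg m])
    rw [qpz_natCast] at hq1 hq2 hq3 hq4 hr1 hr2 hr3 hr4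
    rw [qp_succ] at hr1 hr2 hr3 hr4
    rw [qp_succ (q ^ 3 * c ^ 2 * e ^ 2 / a ^ 2), qp_succ (a ^ 4 / (q * c ^ 3 * e ^ 3)),
      qp_succ (q ^ 4 * c), qp_succ (q ^ 4 * e),
      qp_succ (q ^ 2 * a ^ 3 / (c ^ 2 * e ^ 2)), qp_succ (q ^ 6 * c ^ 3 * e ^ 3 / a ^ 3),
      qp_succ (q * a / c), qp_succ (q * a / e),
      qp_succ' (q * c ^ 2 * e ^ 2 / a ^ 2), qp_succ' (a ^ 4 / (q ^ 3 * c ^ 3 * e ^ 3)),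
      qp_succ' (q * c), qp_succ' (q * e)]
    rw [show q * c ^ 2 * e ^ 2 / a ^ 2 * q ^ 2 = q ^ 3 * c ^ 2 * e ^ 2 / a ^ 2 from by ring,
      show a ^ 4 / (q ^ 3 * c ^ 3 * e ^ 3) * q ^ 2 = a ^ 4 / (q * c ^ 3 * e ^ 3) from by
        field_simp,
      show q * c * q ^ 3 = q ^ 4 * c from by ring,
      show q * e * q ^ 3 = q ^ 4 * e from by ring]
    rw [show (q ^ 2) ^ m = (q ^ m) ^ 2 from by rw [← pow_mul, ← pow_mul, mul_comm],
      show (q ^ 3) ^ m = (q ^ m) ^ 3 from by rw [← pow_mul, ← pow_mul, mul_comm],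
      show q ^ (5 * (m + 1)) = (q ^ m) ^ 5 * q ^ 5 from by
        rw [← pow_mul, ← pow_add]; congr 1; ring,
      show q ^ (2 + (m + 1)) = q ^ m * q ^ 3 from by rw [← pow_add]; congr 1; ring,
      show q ^ (2 * (m + 1)) = (q ^ m) ^ 2 * q ^ 2 from by
        rw [← pow_mul, ← pow_add]; congr 1; ring]
    rw [show (q ^ 2) ^ m = (q ^ m) ^ 2 from by rw [← pow_mul, ← pow_mul, mul_comm]] at hr3 hr4
    rw [show (q ^ 3) ^ m = (q ^ m) ^ 3 from by rw [← pow_mul, ← pow_mul, mul_comm]] at hr1 hr2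
    have hv1 := (mul_ne_zero_iff.mp hr1).2
    have hv2 := (mul_ne_zero_iff.mp hr2).2
    have hv3 := (mul_ne_zero_iff.mp hr3).2
    have hv4 := (mul_ne_zero_iff.mp hr4).2
    exact abstract2 _ _ _ _ _ _ _ _ _ _ _ _ _ _ _ _ _ _ _ _ _ _ _ _ _ _
      hq1 hq2 hq3 hq4 hv1 hv2 hv3 hv4 hl1 hl2 hl3 hl4
      (key_id q a c e (q ^ m) hq ha hc he)
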